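/- arXiv:2301.01639 — 2 statements merged into one kernel-verified Lean document; each statement's English description precedes it below -/
import Mathlib

section
/- Let N ≥ 1, Θ ∈ (0,∞)^N, and let Y : ℤ^N → ℝ be any function. Define ΔY_k = Σ_{i ∈ {0,1}^N} (−1)^{Σ_l i_l} Y(k_1−i_1, …, k_N−i_N), and define G : ℤ^N → ℝ by G_t = Σ_{k_1 = 1−t_2−…−t_N}^{t_1} Σ_{k_2 = 1−k_1−t_3−…−t_N}^{t_2} ⋯ Σ_{k_N = 1−k_1−…−k_{N−1}}^{t_N} e^{−⟨k,Θ⟩} ΔY_k when Σ_{l=1}^N t_l ≥ 1, and G_t = (−1)^N Σ_{k_1 = t_1+1}^{−t_2−…−t_N−N+1} Σ_{k_2 = t_2+1}^{−k_1−t_3−…−t_N−N+2} ⋯ Σ_{k_N = t_N+1}^{−k_1−…−k_{N−1}} e^{−⟨k,Θ⟩} ΔY_k when Σ_{l=1}^N t_l ≤ 0 (empty sums being zero). Then the square increment of G satisfies Δ_t G = e^{−⟨t,Θ⟩} ΔY_t for every t ∈ ℤ^N. -/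
open MeasureTheory Filter

noncomputable section

/-- Two families of real random variables indexed by `ℤ^N` have the same
finite-dimensional distributions. -/
def HasSameFDD {Ω : Type*} [MeasurableSpace Ω] {N : ℕ} (μ : Measure Ω)
    (X Y : (Fin N → ℤ) → Ω → ℝ) : Prop :=
  ∀ (n : ℕ) (t : Fin n → (Fin N → ℤ)),
    μ.map (fun ω i => X (t i) ω) = μ.map (fun ω i => Y (t i) ω)

/-- A random field on `ℤ^N` is stationary if every shift leaves the
finite-dimensional distributions unchanged. -/
def IsStationaryRF {Ω : Type*} [MeasurableSpace Ω] {N : ℕ} (μ : Measure Ω)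
    (X : (Fin N → ℤ) → Ω → ℝ) : Prop :=
  ∀ s : Fin N → ℤ, HasSameFDD μ (fun t => X (t + s)) X

/-- A random field `Y` on `ℤ^N` is `Θ`-self-similar if `(Y_{t+s})_t` equals
`(e^{⟨s,Θ⟩} Y_t)_t` in finite-dimensional distributions for every `s`. -/
def IsSelfSimilar {Ω : Type*} [MeasurableSpace Ω] {N : ℕ} (μ : Measure Ω)
    (Θ : Fin N → ℝ) (Y : (Fin N → ℤ) → Ω → ℝ) : Prop :=
  ∀ s : Fin N → ℤ, HasSameFDD μ (fun t => Y (t + s))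
    (fun t ω => Real.exp (∑ l, (s l : ℝ) * Θ l) * Y t ω)

/-- The square increment `Δ_t X = Σ_{i ∈ {0,1}^N} (−1)^{Σ_l i_l} X_{t−i}`. -/
def sqInc {N : ℕ} (X : (Fin N → ℤ) → ℝ) (t : Fin N → ℤ) : ℝ :=
  ∑ i : Fin N → Bool,
    (-1 : ℝ) ^ ((∑ l, if i l then 1 else 0 : ℕ)) *
      X (fun l => t l - if i l then 1 else 0)

/-- A field has stationary (rectangular) increments if its square-increment
field is stationary. -/
def HasStationaryIncrements {Ω : Type*} [MeasurableSpace Ω] {N : ℕ} (μ : Measure Ω)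
    (G : (Fin N → ℤ) → Ω → ℝ) : Prop :=
  IsStationaryRF μ (fun t ω => sqInc (fun u => G u ω) t)

/-- The inner product `⟨Θ̂, X̂⁻_t⟩ = Σ_{i ∈ {0,1}^N, i ≠ 0} (−1)^{1+Σ_l i_l}
e^{−⟨i,Θ⟩} X_{t−i}`. -/
def prevInner {N : ℕ} (Θ : Fin N → ℝ) (X : (Fin N → ℤ) → ℝ) (t : Fin N → ℤ) : ℝ :=
  ∑ i ∈ Finset.univ.filter (fun i : Fin N → Bool => i ≠ fun _ => false),
    (-1 : ℝ) ^ ((1 + ∑ l, if i l then 1 else 0 : ℕ)) *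
      (Real.exp (-∑ l, (if i l then (1 : ℝ) else 0) * Θ l) *
        X (fun l => t l - if i l then 1 else 0))

/-- Iterated limit in probability `lim_{M₁→∞} ⋯ lim_{M_k→∞} F(M₁,…,M_k) = Z`:
the innermost limit is over the last variable, the outermost over the first. -/
def IterLimInProb {Ω : Type*} [MeasurableSpace Ω] (μ : Measure Ω) :
    (k : ℕ) → ((Fin k → ℕ) → Ω → ℝ) → (Ω → ℝ) → Prop
  | 0, F, Z => ∀ ω, F (fun i => i.elim0) ω = Z ω
  | k + 1, F, Z => ∃ H : ℕ → Ω → ℝ,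
      (∀ M₁ : ℕ, IterLimInProb μ k (fun M => F (Fin.cons M₁ M)) (H M₁)) ∧
      TendstoInMeasure μ H atTop Z

/-- The class `𝒢_Θ`: stationary increment fields `G` vanishing on
`Σ_l t_l ∈ {0,−1,…,−N+1}` such that the iterated limit (in probability)
`lim_{M₁→∞}⋯lim_{M_N→∞} Σ_{j₁=−M₁}^{t₁}⋯Σ_{j_N=−M_N}^{t_N} e^{⟨j,Θ⟩} Δ_j G`
exists as an (almost surely finite, real-valued) random variable for every `t`. -/
def MemClassG {Ω : Type*} [MeasurableSpace Ω] {N : ℕ} (μ : Measure Ω)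
    (Θ : Fin N → ℝ) (G : (Fin N → ℤ) → Ω → ℝ) : Prop :=
  HasStationaryIncrements μ G ∧
  (∀ t : Fin N → ℤ, -(N : ℤ) + 1 ≤ ∑ l, t l → (∑ l, t l) ≤ 0 → ∀ ω, G t ω = 0) ∧
  (∀ t : Fin N → ℤ, ∃ Z : Ω → ℝ,
    IterLimInProb μ N (fun M ω =>
      ∑ j ∈ Finset.Icc (fun l => -(M l : ℤ)) t,
        Real.exp (∑ l, (j l : ℝ) * Θ l) * sqInc (fun u => G u ω) j) Z)

/-- The iterated (chained) sum
`Σ_{k₁ = c − t₂ − … − t_N}^{t₁} Σ_{k₂ = c − k₁ − t₃ − … − t_N}^{t₂} ⋯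
 Σ_{k_N = c − k₁ − … − k_{N−1}}^{t_N} f(k)`, with empty ranges contributing `0`. -/
def iterSumPos : (n : ℕ) → ℤ → (Fin n → ℤ) → ((Fin n → ℤ) → ℝ) → ℝ
  | 0, _, _, f => f (fun i => i.elim0)
  | n + 1, c, t, f =>
      ∑ k ∈ Finset.Icc (c - ∑ l : Fin n, t l.succ) (t 0),
        iterSumPos n (c - k) (fun l => t l.succ) (fun j => f (Fin.cons k j))

/-- The iterated (chained) sum
`Σ_{k₁ = t₁+1}^{c − t₂ − … − t_N − N + 1} Σ_{k₂ = t₂+1}^{c − k₁ − t₃ − … − t_N − N + 2} ⋯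
 Σ_{k_N = t_N+1}^{c − k₁ − … − k_{N−1}} f(k)`, with empty ranges contributing `0`. -/
def iterSumNeg : (n : ℕ) → ℤ → (Fin n → ℤ) → ((Fin n → ℤ) → ℝ) → ℝ
  | 0, _, _, f => f (fun i => i.elim0)
  | n + 1, c, t, f =>
      ∑ k ∈ Finset.Icc (t 0 + 1) (c - (∑ l : Fin n, t l.succ) - (n : ℤ)),
        iterSumNeg n (c - k) (fun l => t l.succ) (fun j => f (Fin.cons k j))

/-- The field `G` built from a (deterministic realisation of a) field `Y`:
for `Σ_l t_l ≥ 1` it is the chained sum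
`Σ_{k₁ = 1−t₂−…−t_N}^{t₁} ⋯ Σ_{k_N = 1−k₁−…−k_{N−1}}^{t_N} e^{−⟨k,Θ⟩} Δ_k Y`,
and for `Σ_l t_l ≤ 0` it is
`(−1)^N Σ_{k₁ = t₁+1}^{−t₂−…−t_N−N+1} ⋯ Σ_{k_N = t_N+1}^{−k₁−…−k_{N−1}} e^{−⟨k,Θ⟩} Δ_k Y`. -/
def lampertiG {N : ℕ} (Θ : Fin N → ℝ) (Y : (Fin N → ℤ) → ℝ) (t : Fin N → ℤ) : ℝ :=
  if 1 ≤ ∑ l, t l then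
    iterSumPos N 1 t (fun k => Real.exp (-∑ l, (k l : ℝ) * Θ l) * sqInc Y k)
  else
    (-1 : ℝ) ^ N *
      iterSumNeg N 0 t (fun k => Real.exp (-∑ l, (k l : ℝ) * Θ l) * sqInc Y k)
namespace LampertiAux

variable {N : ℕ}

/-- The region `{k : k ≤ t, c ≤ Σ k}` as a finset. -/
def posSet (c : ℤ) (t : Fin N → ℤ) : Finset (Fin N → ℤ) :=
  (Finset.Icc (fun l => c - (∑ j, t j) + t l) t).filter (fun k => c ≤ ∑ l, k l)

/-- The region `{k : t + 1 ≤ k, Σ k ≤ c}` as a finset. -/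
def negSet (c : ℤ) (t : Fin N → ℤ) : Finset (Fin N → ℤ) :=
  (Finset.Icc (fun l => t l + 1) (fun l => c - (∑ j, t j) - (N : ℤ) + t l + 1)).filter
    (fun k => (∑ l, k l) ≤ c)

lemma sum_erase_facts (k : Fin N → ℤ) (l : Fin N) :
    ∑ j ∈ Finset.univ.erase l, k j + k l = ∑ j, k j :=
  Finset.sum_erase_add _ _ (Finset.mem_univ l)

lemma mem_posSet {c : ℤ} {t k : Fin N → ℤ} :
    k ∈ posSet c t ↔ (∀ l, k l ≤ t l) ∧ c ≤ ∑ l, k l := by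
  simp only [posSet, Finset.mem_filter, Finset.mem_Icc, Pi.le_def]
  constructor
  · rintro ⟨⟨-, h2⟩, h3⟩; exact ⟨h2, h3⟩
  · rintro ⟨h1, h2⟩
    refine ⟨⟨fun l => ?_, h1⟩, h2⟩
    have hs : ∑ j ∈ Finset.univ.erase l, k j ≤ ∑ j ∈ Finset.univ.erase l, t j :=
      Finset.sum_le_sum (fun j _ => h1 j)
    have hk := sum_erase_facts k l
    have ht := sum_erase_facts t l
    omega

lemma card_erase (l : Fin N) : (Finset.univ.erase l).card = N - 1 := by
  rw [Finset.card_erase_of_mem (Finset.mem_univ l)]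
  simp

lemma mem_negSet {c : ℤ} {t k : Fin N → ℤ} :
    k ∈ negSet c t ↔ (∀ l, t l + 1 ≤ k l) ∧ (∑ l, k l) ≤ c := by
  simp only [negSet, Finset.mem_filter, Finset.mem_Icc, Pi.le_def]
  constructor
  · rintro ⟨⟨h1, -⟩, h3⟩; exact ⟨h1, h3⟩
  · rintro ⟨h1, h2⟩
    refine ⟨⟨h1, fun l => ?_⟩, h2⟩
    have hs : ∑ j ∈ Finset.univ.erase l, (t j + 1) ≤ ∑ j ∈ Finset.univ.erase l, k j :=
      Finset.sum_le_sum (fun j _ => h1 j)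
    have hsplit : ∑ j ∈ Finset.univ.erase l, (t j + 1)
        = ∑ j ∈ Finset.univ.erase l, t j + ((N : ℤ) - 1) := by
      rw [Finset.sum_add_distrib, Finset.sum_const, card_erase]
      have hN : 1 ≤ N ∨ N = 0 := by omega
      rcases hN with h | h
      · simp; omega
      · exact absurd (Finset.mem_univ l) (by subst h; exact l.elim0)
    have hk := sum_erase_facts k l
    have ht := sum_erase_facts t l
    omega

lemma iterSumPos_eq : ∀ (n : ℕ) (c : ℤ) (t : Fin n → ℤ) (f : (Fin n → ℤ) → ℝ),
    c ≤ ∑ l, t l → iterSumPos n c t f = ∑ k ∈ posSet c t, f k := by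
  intro n
  induction n with
  | zero =>
      intro c t f hc
      have hsum : (∑ l : Fin 0, t l) = 0 := rfl
      have hmem : t ∈ posSet c t := mem_posSet.mpr ⟨fun l => le_rfl, by omega⟩
      have hset : posSet c t = {t} := by
        ext k
        simp only [Finset.mem_singleton]
        constructor
        · intro _; exact Subsingleton.elim k t
        · intro h; subst h; exact hmem
      rw [hset, Finset.sum_singleton]
      exact congrArg f (Subsingleton.elim _ _)
  | succ n ih =>
      intro c t f hc
      show (∑ k ∈ Finset.Icc (c - ∑ l : Fin n, t l.succ) (t 0),
        iterSumPos n (c - k) (fun l => t l.succ) (fun j => f (Fin.cons k j)))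
        = ∑ k ∈ posSet c t, f k
      rw [Finset.sum_congr rfl (fun k hk => ih (c - k) (fun l => t l.succ)
        (fun j => f (Fin.cons k j)) (by
          rw [Finset.mem_Icc] at hk
          have hb : (∑ l : Fin n, (fun l => t l.succ) l) = ∑ l : Fin n, t l.succ := rfl
          omega))]
      rw [Finset.sum_sigma']
      refine Finset.sum_nbij'
        (fun p : (_ : ℤ) × (Fin n → ℤ) => (Fin.cons p.1 p.2 : Fin (n + 1) → ℤ))
        (fun k => ⟨k 0, fun l => k l.succ⟩) ?_ ?_ ?_ ?_ ?_
      · rintro ⟨k0, j⟩ hp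
        rw [Finset.mem_sigma, Finset.mem_Icc] at hp
        simp only at hp
        obtain ⟨⟨hlo, hhi⟩, hj⟩ := hp
        rw [mem_posSet] at hj ⊢
        obtain ⟨hj1, hj2⟩ := hj
        constructor
        · intro l
          refine Fin.cases ?_ ?_ l
          · simpa using hhi
          · intro m; simpa using hj1 m
        · rw [Fin.sum_univ_succ]
          simp only [Fin.cons_zero, Fin.cons_succ]
          omega
      · intro k hk
        rw [mem_posSet] at hk
        obtain ⟨h1, h2⟩ := hk
        have hsum : ∑ l : Fin n, k l.succ ≤ ∑ l : Fin n, t l.succ :=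
          Finset.sum_le_sum (fun l _ => h1 l.succ)
        have hS : k 0 + ∑ l : Fin n, k l.succ = ∑ l, k l := (Fin.sum_univ_succ k).symm
        simp only [Finset.mem_sigma, Finset.mem_Icc, mem_posSet]
        exact ⟨⟨by omega, h1 0⟩, fun l => h1 l.succ, by omega⟩
      · rintro ⟨k0, j⟩ _
        simp
      · intro k _
        exact Fin.cons_self_tail k
      · rintro ⟨k0, j⟩ _
        rfl

lemma sum_const_one (n : ℕ) (g : Fin n → ℤ) :
    ∑ l : Fin n, (g l + 1) = (∑ l : Fin n, g l) + (n : ℤ) := by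
  rw [Finset.sum_add_distrib, Finset.sum_const, Finset.card_univ, Fintype.card_fin]
  simp

lemma iterSumNeg_eq : ∀ (n : ℕ) (c : ℤ) (t : Fin n → ℤ) (f : (Fin n → ℤ) → ℝ),
    (∑ l, t l) + n ≤ c → iterSumNeg n c t f = ∑ k ∈ negSet c t, f k := by
  intro n
  induction n with
  | zero =>
      intro c t f hc
      have hsum : (∑ l : Fin 0, t l) = 0 := rfl
      have hmem : t ∈ negSet c t := mem_negSet.mpr ⟨fun l => l.elim0, by omega⟩
      have hset : negSet c t = {t} := by
        ext k
        simp only [Finset.mem_singleton]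
        constructor
        · intro _; exact Subsingleton.elim k t
        · intro h; subst h; exact hmem
      rw [hset, Finset.sum_singleton]
      exact congrArg f (Subsingleton.elim _ _)
  | succ n ih =>
      intro c t f hc
      show (∑ k ∈ Finset.Icc (t 0 + 1) (c - (∑ l : Fin n, t l.succ) - (n : ℤ)),
        iterSumNeg n (c - k) (fun l => t l.succ) (fun j => f (Fin.cons k j)))
        = ∑ k ∈ negSet c t, f k
      rw [Finset.sum_congr rfl (fun k hk => ih (c - k) (fun l => t l.succ)
        (fun j => f (Fin.cons k j)) (by
          rw [Finset.mem_Icc] at hk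
          have hb : (∑ l : Fin n, (fun l => t l.succ) l) = ∑ l : Fin n, t l.succ := rfl
          omega))]
      rw [Finset.sum_sigma']
      refine Finset.sum_nbij'
        (fun p : (_ : ℤ) × (Fin n → ℤ) => (Fin.cons p.1 p.2 : Fin (n + 1) → ℤ))
        (fun k => ⟨k 0, fun l => k l.succ⟩) ?_ ?_ ?_ ?_ ?_
      · rintro ⟨k0, j⟩ hp
        rw [Finset.mem_sigma, Finset.mem_Icc] at hp
        simp only at hp
        obtain ⟨⟨hlo, hhi⟩, hj⟩ := hp
        rw [mem_negSet] at hj ⊢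
        obtain ⟨hj1, hj2⟩ := hj
        constructor
        · intro l
          refine Fin.cases ?_ ?_ l
          · simpa using hlo
          · intro m; simpa using hj1 m
        · rw [Fin.sum_univ_succ]
          simp only [Fin.cons_zero, Fin.cons_succ]
          omega
      · intro k hk
        rw [mem_negSet] at hk
        obtain ⟨h1, h2⟩ := hk
        have hsum : ∑ l : Fin n, (t l.succ + 1) ≤ ∑ l : Fin n, k l.succ :=
          Finset.sum_le_sum (fun l _ => h1 l.succ)
        have hd := sum_const_one n (fun l => t l.succ)
        have hb : (∑ l : Fin n, ((fun l => t l.succ) l + 1)) = ∑ l : Fin n, (t l.succ + 1) := rfl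
        have hS : k 0 + ∑ l : Fin n, k l.succ = ∑ l, k l := (Fin.sum_univ_succ k).symm
        simp only [Finset.mem_sigma, Finset.mem_Icc, mem_negSet]
        exact ⟨⟨h1 0, by omega⟩, fun l => h1 l.succ, by omega⟩
      · rintro ⟨k0, j⟩ _
        simp
      · intro k _
        exact Fin.cons_self_tail k
      · rintro ⟨k0, j⟩ _
        rfl

end LampertiAux

namespace LampertiAux

variable {N : ℕ}

lemma prod_ite_pow (P : Fin N → Prop) [DecidablePred P] (e : Fin N → ℕ) :
    (∏ l, if P l then (-1 : ℝ) ^ (e l) else 0) =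
      if (∀ l, P l) then (-1 : ℝ) ^ (∑ l, e l) else 0 := by
  by_cases h : ∀ l, P l
  · rw [if_pos h, Finset.prod_congr rfl (fun l _ => if_pos (h l)),
      Finset.prod_pow_eq_pow_sum]
  · push_neg at h
    obtain ⟨l0, hl0⟩ := h
    rw [if_neg (fun hh => hl0 (hh l0))]
    exact Finset.prod_eq_zero (Finset.mem_univ l0) (if_neg hl0)

lemma bi_nonneg (i : Fin N → Bool) : 0 ≤ (∑ l, if i l then (1:ℤ) else 0) :=
  Finset.sum_nonneg (fun l _ => by split <;> omega)

lemma bi_le (i : Fin N → Bool) : (∑ l, if i l then (1:ℤ) else 0) ≤ N := by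
  calc (∑ l, if i l then (1:ℤ) else 0) ≤ ∑ _l : Fin N, (1:ℤ) :=
        Finset.sum_le_sum (fun l _ => by split <;> omega)
    _ = N := by simp

lemma core (k t : Fin N → ℤ) :
    ∑ i : Fin N → Bool,
      (if 1 ≤ ∑ l, (t l - if i l then (1:ℤ) else 0) then
        (if (∀ l, k l ≤ t l - if i l then (1:ℤ) else 0) ∧ 1 ≤ ∑ l, k l
          then (-1 : ℝ) ^ ((∑ l, if i l then 1 else 0 : ℕ)) else 0)
      else
        (if (∀ l, t l - (if i l then (1:ℤ) else 0) + 1 ≤ k l) ∧ (∑ l, k l) ≤ 0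
          then (-1 : ℝ) ^ (N + (∑ l, if i l then 1 else 0 : ℕ)) else 0)) =
    if k = t then 1 else 0 := by
  have hsubd : ∀ i : Fin N → Bool,
      (∑ l, (t l - if i l then (1:ℤ) else 0))
        = (∑ l, t l) - (∑ l, if i l then (1:ℤ) else 0) :=
    fun i => Finset.sum_sub_distrib _ _
  rcases le_or_gt 1 (∑ l, k l) with hk | hk
  · -- Σk ≥ 1
    have hterm : ∀ i : Fin N → Bool,
        (if 1 ≤ ∑ l, (t l - if i l then (1:ℤ) else 0) then
          (if (∀ l, k l ≤ t l - if i l then (1:ℤ) else 0) ∧ 1 ≤ ∑ l, k l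
            then (-1 : ℝ) ^ ((∑ l, if i l then 1 else 0 : ℕ)) else 0)
        else
          (if (∀ l, t l - (if i l then (1:ℤ) else 0) + 1 ≤ k l) ∧ (∑ l, k l) ≤ 0
            then (-1 : ℝ) ^ (N + (∑ l, if i l then 1 else 0 : ℕ)) else 0))
        = ∏ l, (if k l + (if i l then (1:ℤ) else 0) ≤ t l
            then (-1:ℝ) ^ ((if i l then 1 else 0 : ℕ)) else 0) := by
      intro i
      rw [prod_ite_pow (fun l => k l + (if i l then (1:ℤ) else 0) ≤ t l)
        (fun l => (if i l then 1 else 0 : ℕ))]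
      by_cases hall : ∀ l, k l + (if i l then (1:ℤ) else 0) ≤ t l
      · have hsum : (∑ l, (k l + if i l then (1:ℤ) else 0)) ≤ ∑ l, t l :=
          Finset.sum_le_sum (fun l _ => hall l)
        rw [Finset.sum_add_distrib] at hsum
        have h1 : 1 ≤ ∑ l, (t l - if i l then (1:ℤ) else 0) := by
          rw [hsubd i]; omega
        rw [if_pos h1, if_pos ⟨fun l => by have := hall l; omega, hk⟩, if_pos hall]
      · rw [if_neg hall]
        by_cases h1 : 1 ≤ ∑ l, (t l - if i l then (1:ℤ) else 0)
        · rw [if_pos h1, if_neg]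
          rintro ⟨hcond, -⟩
          exact hall (fun l => by have := hcond l; omega)
        · rw [if_neg h1, if_neg]
          rintro ⟨-, hcond⟩
          omega
    rw [Finset.sum_congr rfl (fun i _ => hterm i),
      ← Fintype.prod_sum (fun (l : Fin N) (b : Bool) =>
        if k l + (if b then (1:ℤ) else 0) ≤ t l
          then (-1:ℝ) ^ ((if b then 1 else 0 : ℕ)) else 0)]
    have hfac : ∀ l, (∑ b : Bool, (if k l + (if b then (1:ℤ) else 0) ≤ t l
        then (-1:ℝ) ^ ((if b then 1 else 0 : ℕ)) else 0)) = if k l = t l then 1 else 0 := by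
      intro l
      rw [Fintype.sum_bool]
      norm_num
      split_ifs <;> (try omega) <;> norm_num
    rw [Finset.prod_congr rfl (fun l _ => hfac l)]
    by_cases hkt : k = t
    · subst hkt; simp
    · rw [if_neg hkt]
      obtain ⟨l0, hl0⟩ : ∃ l, k l ≠ t l := by
        by_contra h; push_neg at h; exact hkt (funext h)
      exact Finset.prod_eq_zero (Finset.mem_univ l0) (if_neg hl0)
  · -- Σk ≤ 0
    have hterm : ∀ i : Fin N → Bool,
        (if 1 ≤ ∑ l, (t l - if i l then (1:ℤ) else 0) then
          (if (∀ l, k l ≤ t l - if i l then (1:ℤ) else 0) ∧ 1 ≤ ∑ l, k l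
            then (-1 : ℝ) ^ ((∑ l, if i l then 1 else 0 : ℕ)) else 0)
        else
          (if (∀ l, t l - (if i l then (1:ℤ) else 0) + 1 ≤ k l) ∧ (∑ l, k l) ≤ 0
            then (-1 : ℝ) ^ (N + (∑ l, if i l then 1 else 0 : ℕ)) else 0))
        = (-1:ℝ) ^ N * ∏ l, (if t l + 1 ≤ k l + (if i l then (1:ℤ) else 0)
            then (-1:ℝ) ^ ((if i l then 1 else 0 : ℕ)) else 0) := by
      intro i
      rw [prod_ite_pow (fun l => t l + 1 ≤ k l + (if i l then (1:ℤ) else 0))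
        (fun l => (if i l then 1 else 0 : ℕ))]
      by_cases hall : ∀ l, t l + 1 ≤ k l + (if i l then (1:ℤ) else 0)
      · have hsum : (∑ l, (t l - if i l then (1:ℤ) else 0)) ≤ ∑ l, (k l - 1) :=
          Finset.sum_le_sum (fun l _ => by have := hall l; omega)
        have hs2 : (∑ l, (k l - (1:ℤ))) = (∑ l, k l) - N := by
          rw [Finset.sum_sub_distrib, Finset.sum_const, Finset.card_univ,
            Fintype.card_fin]
          simp
        have h1 : ¬ (1 ≤ ∑ l, (t l - if i l then (1:ℤ) else 0)) := by omega
        rw [if_neg h1, if_pos ⟨fun l => by have := hall l; omega, by omega⟩,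
          if_pos hall, pow_add]
      · rw [if_neg hall, mul_zero]
        by_cases h1 : 1 ≤ ∑ l, (t l - if i l then (1:ℤ) else 0)
        · rw [if_pos h1, if_neg]
          rintro ⟨-, hcond⟩
          omega
        · rw [if_neg h1, if_neg]
          rintro ⟨hcond, -⟩
          exact hall (fun l => by have := hcond l; omega)
    rw [Finset.sum_congr rfl (fun i _ => hterm i), ← Finset.mul_sum,
      ← Fintype.prod_sum (fun (l : Fin N) (b : Bool) =>
        if t l + 1 ≤ k l + (if b then (1:ℤ) else 0)
          then (-1:ℝ) ^ ((if b then 1 else 0 : ℕ)) else 0)]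
    have hfac : ∀ l, (∑ b : Bool, (if t l + 1 ≤ k l + (if b then (1:ℤ) else 0)
        then (-1:ℝ) ^ ((if b then 1 else 0 : ℕ)) else 0)) = if k l = t l then -1 else 0 := by
      intro l
      rw [Fintype.sum_bool]
      norm_num
      split_ifs <;> (try omega) <;> norm_num
    rw [Finset.prod_congr rfl (fun l _ => hfac l)]
    by_cases hkt : k = t
    · subst hkt
      rw [if_pos rfl]
      rw [Finset.prod_congr rfl (fun l (_ : l ∈ Finset.univ) => if_pos rfl),
        Finset.prod_const, Finset.card_univ, Fintype.card_fin, ← pow_add]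
      exact Even.neg_one_pow ⟨N, rfl⟩
    · rw [if_neg hkt]
      obtain ⟨l0, hl0⟩ : ∃ l, k l ≠ t l := by
        by_contra h; push_neg at h; exact hkt (funext h)
      have hz : (∏ l, if k l = t l then (-1:ℝ) else 0) = 0 :=
        Finset.prod_eq_zero (Finset.mem_univ l0) (if_neg hl0)
      rw [hz, mul_zero]

end LampertiAux

namespace LampertiAux

lemma lampertiG_eq {N : ℕ} (hN : 1 ≤ N) (Θ : Fin N → ℝ) (Y : (Fin N → ℤ) → ℝ)
    (t : Fin N → ℤ) :
    lampertiG Θ Y t =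
      if 1 ≤ ∑ l, t l then
        ∑ k ∈ posSet 1 t, Real.exp (-∑ l, (k l : ℝ) * Θ l) * sqInc Y k
      else
        (-1 : ℝ) ^ N *
          ∑ k ∈ negSet 0 t, Real.exp (-∑ l, (k l : ℝ) * Θ l) * sqInc Y k := by
  unfold lampertiG
  by_cases h : 1 ≤ ∑ l, t l
  · rw [if_pos h, if_pos h, iterSumPos_eq N 1 t _ h]
  · rw [if_neg h, if_neg h]
    push_neg at h
    congr 1
    by_cases h2 : (∑ l, t l) + (N : ℤ) ≤ 0
    · exact iterSumNeg_eq N 0 t _ (by omega)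
    · obtain ⟨m, rfl⟩ : ∃ m, N = m + 1 := ⟨N - 1, by omega⟩
      have hS : t 0 + ∑ l : Fin m, t l.succ = ∑ l, t l := (Fin.sum_univ_succ t).symm
      have hempty : Finset.Icc (t 0 + 1) (0 - (∑ l : Fin m, t l.succ) - (m : ℤ)) = ∅ := by
        apply Finset.Icc_eq_empty
        push_cast at h2 ⊢
        omega
      show (∑ k ∈ Finset.Icc (t 0 + 1) (0 - (∑ l : Fin m, t l.succ) - (m : ℤ)),
        iterSumNeg m (0 - k) (fun l => t l.succ)
          (fun j => (fun k => Real.exp (-∑ l, (k l : ℝ) * Θ l) * sqInc Y k) (Fin.cons k j))) = _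
      rw [hempty, Finset.sum_empty]
      have hns : negSet 0 t = ∅ := by
        rw [Finset.eq_empty_iff_forall_notMem]
        intro k hkmem
        rw [mem_negSet] at hkmem
        obtain ⟨h1', h2'⟩ := hkmem
        have hss : ∑ l, (t l + 1) ≤ ∑ l, k l :=
          Finset.sum_le_sum (fun l _ => h1' l)
        have hco := sum_const_one (m + 1) t
        push_cast at h2 hco ⊢
        omega
      rw [hns, Finset.sum_empty]

end LampertiAux

open LampertiAux

/-- Lemma gG (ii): the square increment of the field `G` built
from `Y` via the chained sums satisfies `Δ_t G = e^{−⟨t,Θ⟩} Δ_t Y` for every `t`. -/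
theorem lampertiG_sqInc {N : ℕ} (hN : 1 ≤ N) (Θ : Fin N → ℝ)
    (hΘ : ∀ l, 0 < Θ l) (Y : (Fin N → ℤ) → ℝ) (t : Fin N → ℤ) :
    sqInc (lampertiG Θ Y) t = Real.exp (-∑ l, (t l : ℝ) * Θ l) * sqInc Y t := by
  classical
  set g : (Fin N → ℤ) → ℝ := fun k => Real.exp (-∑ l, (k l : ℝ) * Θ l) * sqInc Y k with hg
  set B : ℤ := |∑ j, t j| + (N : ℤ) + 2 with hB
  set T : Finset (Fin N → ℤ) := Finset.Icc (fun l => t l - B) (fun l => t l + B) with hT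
  have hBpos : 0 ≤ |∑ j, t j| := abs_nonneg _
  have habs1 : (∑ j, t j) ≤ |∑ j, t j| := le_abs_self _
  have habs2 : -|∑ j, t j| ≤ ∑ j, t j := neg_abs_le _
  have htT : t ∈ T := by
    rw [hT, Finset.mem_Icc]
    constructor
    · intro l
      show t l - B ≤ t l
      omega
    · intro l
      show t l ≤ t l + B
      omega
  have key : ∀ i : Fin N → Bool,
      lampertiG Θ Y (fun l => t l - if i l then (1 : ℤ) else 0) =
      ∑ k ∈ T,
        (if 1 ≤ ∑ l, (t l - if i l then (1:ℤ) else 0) then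
          (if (∀ l, k l ≤ t l - if i l then (1:ℤ) else 0) ∧ 1 ≤ ∑ l, k l then g k else 0)
        else
          (-1:ℝ) ^ N *
            (if (∀ l, t l - (if i l then (1:ℤ) else 0) + 1 ≤ k l) ∧ (∑ l, k l) ≤ 0
              then g k else 0)) := by
    intro i
    rw [lampertiG_eq hN]
    have hble := bi_le i
    have hbnn := bi_nonneg i
    have hsub : (∑ l, (t l - if i l then (1:ℤ) else 0))
        = (∑ l, t l) - ∑ l, (if i l then (1:ℤ) else 0) := Finset.sum_sub_distrib _ _
    by_cases h : 1 ≤ ∑ l, (t l - if i l then (1:ℤ) else 0)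
    · simp only [h, if_true]
      have hset : T.filter
          (fun k => (∀ l, k l ≤ t l - if i l then (1:ℤ) else 0) ∧ 1 ≤ ∑ l, k l)
          = posSet 1 (fun l => t l - if i l then (1:ℤ) else 0) := by
        ext k
        rw [Finset.mem_filter, mem_posSet]
        constructor
        · rintro ⟨-, h1, h2⟩; exact ⟨h1, h2⟩
        · rintro ⟨h1, h2⟩
          refine ⟨?_, h1, h2⟩
          have hmem : k ∈ posSet 1 (fun l => t l - if i l then (1:ℤ) else 0) :=
            mem_posSet.mpr ⟨h1, h2⟩
          rw [posSet, Finset.mem_filter, Finset.mem_Icc] at hmem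
          rw [hT, Finset.mem_Icc]
          refine ⟨fun l => ?_, fun l => ?_⟩
          · have h1l : 1 - (∑ j, (t j - if i j then (1:ℤ) else 0))
                + (t l - if i l then (1:ℤ) else 0) ≤ k l := hmem.1.1 l
            have hil : (0:ℤ) ≤ (if i l then (1:ℤ) else 0)
                ∧ (if i l then (1:ℤ) else 0) ≤ 1 := by split <;> omega
            show t l - B ≤ k l
            omega
          · have h1l : k l ≤ t l - (if i l then (1:ℤ) else 0) := h1 l
            have hil : (0:ℤ) ≤ (if i l then (1:ℤ) else 0)
                ∧ (if i l then (1:ℤ) else 0) ≤ 1 := by split <;> omega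
            show k l ≤ t l + B
            omega
      rw [← hset, Finset.sum_filter]
    · simp only [h, if_false]
      have hset : T.filter
            (fun k => (∀ l, t l - (if i l then (1:ℤ) else 0) + 1 ≤ k l) ∧ (∑ l, k l) ≤ 0)
            = negSet 0 (fun l => t l - if i l then (1:ℤ) else 0) := by
          ext k
          rw [Finset.mem_filter, mem_negSet]
          constructor
          · rintro ⟨-, h1, h2⟩; exact ⟨h1, h2⟩
          · rintro ⟨h1, h2⟩
            refine ⟨?_, h1, h2⟩
            have hmem : k ∈ negSet 0 (fun l => t l - if i l then (1:ℤ) else 0) :=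
              mem_negSet.mpr ⟨h1, h2⟩
            rw [negSet, Finset.mem_filter, Finset.mem_Icc] at hmem
            rw [hT, Finset.mem_Icc]
            refine ⟨fun l => ?_, fun l => ?_⟩
            · have h1l : (t l - if i l then (1:ℤ) else 0) + 1 ≤ k l := h1 l
              have hil : (0:ℤ) ≤ (if i l then (1:ℤ) else 0)
                  ∧ (if i l then (1:ℤ) else 0) ≤ 1 := by split <;> omega
              show t l - B ≤ k l
              omega
            · have h1l : k l ≤ 0 - (∑ j, (t j - if i j then (1:ℤ) else 0))
                  - (N : ℤ) + (t l - if i l then (1:ℤ) else 0) + 1 := hmem.1.2 l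
              have hil : (0:ℤ) ≤ (if i l then (1:ℤ) else 0)
                  ∧ (if i l then (1:ℤ) else 0) ≤ 1 := by split <;> omega
              show k l ≤ t l + B
              omega
      rw [← hset, Finset.mul_sum, Finset.sum_filter]
      exact Finset.sum_congr rfl (fun k _ => by split_ifs <;> simp [hg])
  have hgt : Real.exp (-∑ l, (t l : ℝ) * Θ l) * sqInc Y t = g t := rfl
  rw [hgt]
  show (∑ i : Fin N → Bool, (-1:ℝ) ^ ((∑ l, if i l then 1 else 0 : ℕ)) *
      lampertiG Θ Y (fun l => t l - if i l then 1 else 0)) = g t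
  have step1 : ∀ i : Fin N → Bool,
      (-1:ℝ) ^ ((∑ l, if i l then 1 else 0 : ℕ)) *
        lampertiG Θ Y (fun l => t l - if i l then 1 else 0)
      = ∑ k ∈ T,
        (if 1 ≤ ∑ l, (t l - if i l then (1:ℤ) else 0) then
          (if (∀ l, k l ≤ t l - if i l then (1:ℤ) else 0) ∧ 1 ≤ ∑ l, k l
            then (-1 : ℝ) ^ ((∑ l, if i l then 1 else 0 : ℕ)) else 0)
        else
          (if (∀ l, t l - (if i l then (1:ℤ) else 0) + 1 ≤ k l) ∧ (∑ l, k l) ≤ 0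
            then (-1 : ℝ) ^ (N + (∑ l, if i l then 1 else 0 : ℕ)) else 0)) * g k := by
    intro i
    rw [key i, Finset.mul_sum]
    refine Finset.sum_congr rfl (fun k _ => ?_)
    split_ifs <;> (try rw [pow_add]) <;> ring
  rw [Finset.sum_congr rfl (fun i _ => step1 i), Finset.sum_comm]
  have step2 : ∀ k : Fin N → ℤ,
      (∑ i : Fin N → Bool,
        (if 1 ≤ ∑ l, (t l - if i l then (1:ℤ) else 0) then
          (if (∀ l, k l ≤ t l - if i l then (1:ℤ) else 0) ∧ 1 ≤ ∑ l, k l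
            then (-1 : ℝ) ^ ((∑ l, if i l then 1 else 0 : ℕ)) else 0)
        else
          (if (∀ l, t l - (if i l then (1:ℤ) else 0) + 1 ≤ k l) ∧ (∑ l, k l) ≤ 0
            then (-1 : ℝ) ^ (N + (∑ l, if i l then 1 else 0 : ℕ)) else 0)) * g k)
      = if k = t then g k else 0 := by
    intro k
    rw [← Finset.sum_mul, core k t]
    split_ifs <;> simp
  rw [Finset.sum_congr rfl (fun k _ => step2 k), Finset.sum_ite_eq' T t g, if_pos htT]
end
end

section
/- Let N ≥ 1, Θ = (θ_1,…,θ_N) ∈ (0,∞)^N, and let X = (X_t)_{t∈ℤ^N} be a random field. Suppose there exists a field G = (G_t)_{t∈ℤ^N} in the class 𝒢_Θ such that X_t = ⟨Θ̂, X̂⁻_t⟩ + Δ_t G for every t ∈ ℤ^N, and suppose that for every j ∈ {1,…,N} and all fixed t_1,…,t_{j−1},t_{j+1},…,t_N ∈ ℤ, e^{m θ_j} X_{t_1,…,t_{j−1},m,t_{j+1},…,t_N} → 0 in probability as m → −∞. Then X is stationary. -/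
open MeasureTheory Filter

noncomputable section

section StatAux
open Topology

section TimAux

variable {Ω : Type*} [MeasurableSpace Ω] {μ : Measure Ω} {ι : Type*} {l : Filter ι}

lemma tim_comp {E : Type*} [EDist E] {f : ι → Ω → E} {g : Ω → E} {ι' : Type*} {l' : Filter ι'}
    (hf : TendstoInMeasure μ f l g) {u : ι' → ι} (hu : Tendsto u l' l) :
    TendstoInMeasure μ (fun i => f (u i)) l' g := fun ε hε => (hf ε hε).comp hu

lemma tim_zero : TendstoInMeasure μ (fun (_ : ι) (_ : Ω) => (0:ℝ)) l (fun _ => 0) := by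
  rw [tendstoInMeasure_iff_dist]
  intro ε hε
  have hset : {x : Ω | ε ≤ dist ((0:ℝ)) ((0:ℝ))} = (∅ : Set Ω) := by
    ext x; simp [hε.not_ge]
  simp only [hset, measure_empty]
  exact tendsto_const_nhds

lemma tim_const_mul (c : ℝ) {f : ι → Ω → ℝ}
    (hf : TendstoInMeasure μ f l (fun _ => 0)) :
    TendstoInMeasure μ (fun i ω => c * f i ω) l (fun _ => 0) := by
  rcases eq_or_ne c 0 with rfl | hc
  · simpa using tim_zero
  · rw [tendstoInMeasure_iff_dist] at hf ⊢
    intro ε hε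
    have hc' : (0:ℝ) < |c| := abs_pos.2 hc
    have h := hf (ε / |c|) (div_pos hε hc')
    refine h.congr' ?_
    filter_upwards with i
    congr 1
    ext x
    simp only [Set.mem_setOf_eq, Real.dist_eq, sub_zero, abs_mul]
    rw [div_le_iff₀ hc', mul_comm]

lemma tim_add_zero {f g : ι → Ω → ℝ}
    (hf : TendstoInMeasure μ f l (fun _ => 0)) (hg : TendstoInMeasure μ g l (fun _ => 0)) :
    TendstoInMeasure μ (fun i ω => f i ω + g i ω) l (fun _ => 0) := by
  rw [tendstoInMeasure_iff_dist] at hf hg ⊢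
  intro ε hε
  have hf2 := hf (ε/2) (by linarith)
  have hg2 := hg (ε/2) (by linarith)
  have hsum : Tendsto (fun i => μ {x | ε/2 ≤ dist (f i x) 0} + μ {x | ε/2 ≤ dist (g i x) 0}) l (𝓝 0) := by
    simpa using Tendsto.add hf2 hg2
  refine tendsto_of_tendsto_of_tendsto_of_le_of_le tendsto_const_nhds hsum
    (fun i => zero_le) (fun i => ?_)
  refine le_trans (measure_mono ?_) (measure_union_le _ _)
  intro x hx
  simp only [Set.mem_setOf_eq, Real.dist_eq, sub_zero] at hx
  simp only [Set.mem_union, Set.mem_setOf_eq, Real.dist_eq, sub_zero]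
  by_cases h : ε/2 ≤ |f i x|
  · exact Or.inl h
  · refine Or.inr ?_
    have := abs_add_le (f i x) (g i x)
    push_neg at h
    linarith
lemma tim_sum_zero {γ : Type*} (s : Finset γ) {f : γ → ι → Ω → ℝ}
    (hf : ∀ c ∈ s, TendstoInMeasure μ (f c) l (fun _ => 0)) :
    TendstoInMeasure μ (fun i ω => ∑ c ∈ s, f c i ω) l (fun _ => 0) := by
  classical
  induction s using Finset.induction_on with
  | empty => simpa using tim_zero
  | @insert a s' ha ih =>
      have h1 := hf a (Finset.mem_insert_self a s')
      have h2 := ih (fun c hc => hf c (Finset.mem_insert_of_mem hc))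
      have h3 := tim_add_zero h1 h2
      refine TendstoInMeasure.congr (fun i => ?_) (by rfl) h3
      filter_upwards with ω
      rw [Finset.sum_insert ha]

lemma tim_pi {n : ℕ} {F : ι → Ω → (Fin n → ℝ)} {G : Ω → (Fin n → ℝ)}
    (h : ∀ i : Fin n, TendstoInMeasure μ (fun m ω => F m ω i) l (fun ω => G ω i)) :
    TendstoInMeasure μ F l G := by
  simp only [tendstoInMeasure_iff_dist] at h ⊢
  intro ε hε
  have hsum : Tendsto (fun m => ∑ i : Fin n, μ {x | ε ≤ dist (F m x i) (G x i)}) l (𝓝 0) := by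
    have : Tendsto (fun m => ∑ i : Fin n, μ {x | ε ≤ dist (F m x i) (G x i)}) l
        (𝓝 (∑ _i : Fin n, 0)) := tendsto_finset_sum _ (fun i _ => h i ε hε)
    simpa using this
  refine tendsto_of_tendsto_of_tendsto_of_le_of_le tendsto_const_nhds hsum
    (fun m => zero_le) (fun m => ?_)
  refine le_trans (measure_mono ?_) (measure_iUnion_fintype_le _ _)
  intro x hx
  simp only [Set.mem_setOf_eq] at hx
  by_contra hcon
  simp only [Set.mem_iUnion, Set.mem_setOf_eq, not_exists, not_le] at hcon
  have : dist (F m x) (G x) < ε := (dist_pi_lt_iff hε).2 fun i => hcon i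
  exact absurd hx (not_le.2 this)

/-- Core lemma: equality in distribution passes through limits in measure. -/
lemma map_eq_of_tim {n : ℕ} {H H' : ℕ → Ω → (Fin n → ℝ)} {Z Z' : Ω → (Fin n → ℝ)}
    [IsProbabilityMeasure μ]
    (hHm : ∀ m, Measurable (H m)) (hH'm : ∀ m, Measurable (H' m))
    (hZ : Measurable Z) (hZ' : Measurable Z')
    (heq : ∀ᶠ m in atTop, μ.map (H m) = μ.map (H' m))
    (h1 : TendstoInMeasure μ H atTop Z) (h2 : TendstoInMeasure μ H' atTop Z') :
    μ.map Z = μ.map Z' := by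
  have : IsProbabilityMeasure (μ.map Z) := Measure.isProbabilityMeasure_map hZ.aemeasurable
  have : IsProbabilityMeasure (μ.map Z') := Measure.isProbabilityMeasure_map hZ'.aemeasurable
  refine MeasureTheory.ext_of_forall_lintegral_eq_of_IsFiniteMeasure (fun f => ?_)
  have key : ∀ (K : ℕ → Ω → (Fin n → ℝ)) (W : Ω → (Fin n → ℝ)), (∀ m, Measurable (K m)) →
      Measurable W → TendstoInMeasure μ K atTop W →
      Tendsto (fun m => ∫⁻ ω, (f (K m ω) : ENNReal) ∂μ) atTop (𝓝 (∫⁻ ω, (f (W ω) : ENNReal) ∂μ)) := by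
    intro K W hKm hWm hKW
    refine tendsto_of_subseq_tendsto (fun ns hns => ?_)
    have hsub : TendstoInMeasure μ (fun k => K (ns k)) atTop W := tim_comp hKW hns
    obtain ⟨ms, -, hae⟩ := hsub.exists_seq_tendsto_ae
    refine ⟨ms, ?_⟩
    refine tendsto_lintegral_of_dominated_convergence (fun _ => ((nndist f 0 : NNReal) : ENNReal)) ?_ ?_ ?_ ?_
    · intro k
      exact (measurable_coe_nnreal_ennreal.comp (f.continuous.measurable.comp (hKm (ns (ms k)))))
    · intro k
      filter_upwards with ω
      exact ENNReal.coe_le_coe.2 (BoundedContinuousFunction.NNReal.upper_bound f _)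
    · simp only [lintegral_const]
      exact ENNReal.mul_ne_top ENNReal.coe_ne_top (measure_ne_top μ _)
    · filter_upwards [hae] with ω hω
      exact (ENNReal.tendsto_coe.2 ((f.continuous.tendsto _).comp hω))
  have k1 := key H Z hHm hZ h1
  have k2 := key H' Z' hH'm hZ' h2
  have keq : ∀ᶠ m in atTop, (fun m => ∫⁻ ω, (f (H m ω) : ENNReal) ∂μ) m
      = (fun m => ∫⁻ ω, (f (H' m ω) : ENNReal) ∂μ) m := by
    filter_upwards [heq] with m hm
    have e1 : ∫⁻ ω, (f (H m ω) : ENNReal) ∂μ = ∫⁻ x, (f x : ENNReal) ∂(μ.map (H m)) :=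
      (lintegral_map (measurable_coe_nnreal_ennreal.comp f.continuous.measurable) (hHm m)).symm
    have e2 : ∫⁻ ω, (f (H' m ω) : ENNReal) ∂μ = ∫⁻ x, (f x : ENNReal) ∂(μ.map (H' m)) :=
      (lintegral_map (measurable_coe_nnreal_ennreal.comp f.continuous.measurable) (hH'm m)).symm
    rw [e1, e2, hm]
  have hfin := tendsto_nhds_unique (k1.congr' keq) k2
  rw [lintegral_map (f := fun x => ((f x : ENNReal)))
      (measurable_coe_nnreal_ennreal.comp f.continuous.measurable) hZ,
    lintegral_map (f := fun x => ((f x : ENNReal)))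
      (measurable_coe_nnreal_ennreal.comp f.continuous.measurable) hZ', hfin]

end TimAux


lemma sum_Icc_sub' (g : ℤ → ℝ) (a : ℤ) : ∀ b : ℤ, a ≤ b →
    ∑ k ∈ Finset.Icc a b, (g k - g (k-1)) = g b - g (a-1) := by
  refine Int.le_induction ?_ ?_
  · rw [Finset.Icc_self, Finset.sum_singleton]
  · intro b hb ih
    have hins : Finset.Icc a (b+1) = insert (b+1) (Finset.Icc a b) := by
      ext x; simp only [Finset.mem_Icc, Finset.mem_insert]; omega
    have hnot : (b+1) ∉ Finset.Icc a b := by simp [Finset.mem_Icc]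
    rw [hins, Finset.sum_insert hnot, ih]
    ring_nf

lemma sum_piFinset_succ {n : ℕ} (t : Fin (n+1) → Finset ℤ) (f : (Fin (n+1) → ℤ) → ℝ) :
    ∑ j ∈ Fintype.piFinset t, f j
      = ∑ k ∈ t 0, ∑ j ∈ Fintype.piFinset (fun l : Fin n => t l.succ), f (Fin.cons k j) := by
  rw [← Finset.sum_product']
  refine Finset.sum_nbij' (fun j => (j 0, fun l => j l.succ)) (fun p => Fin.cons p.1 p.2)
    ?_ ?_ ?_ ?_ ?_
  · intro j hj
    simp only [Fintype.mem_piFinset] at hj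
    simp only [Finset.mem_product, Fintype.mem_piFinset]
    exact ⟨hj 0, fun l => hj l.succ⟩
  · intro p hp
    simp only [Finset.mem_product, Fintype.mem_piFinset] at hp
    simp only [Fintype.mem_piFinset]
    intro l
    refine Fin.cases ?_ ?_ l
    · simpa using hp.1
    · intro i; simpa using hp.2 i
  · intro j hj
    ext l
    refine Fin.cases ?_ ?_ l <;> simp
  · intro p hp
    simp
  · intro j hj
    congr 1
    ext l
    refine Fin.cases ?_ ?_ l <;> simp

lemma sum_bool_pi_succ {n : ℕ} (g : (Fin (n+1) → Bool) → ℝ) :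
    ∑ i : Fin (n+1) → Bool, g i = ∑ b : Bool, ∑ i' : Fin n → Bool, g (Fin.cons b i') := by
  rw [← Equiv.sum_comp (Fin.consEquiv (fun _ : Fin (n+1) => Bool)) g, Fintype.sum_prod_type]
  rfl

lemma sqInc_cons {n : ℕ} (Y : (Fin (n+1) → ℤ) → ℝ) (k : ℤ) (j : Fin n → ℤ) :
    sqInc Y (Fin.cons k j)
      = sqInc (fun u => Y (Fin.cons k u)) j - sqInc (fun u => Y (Fin.cons (k-1) u)) j := by
  unfold sqInc
  rw [sum_bool_pi_succ]
  have hb : ∀ (b : Bool) (i' : Fin n → Bool),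
      (fun l => Fin.cons k j l - if (Fin.cons b i' : Fin (n+1) → Bool) l then 1 else 0)
        = Fin.cons (k - if b then 1 else 0) (fun l => j l - if i' l then 1 else 0) := by
    intro b i'
    ext l
    refine Fin.cases ?_ ?_ l <;> simp
  have hs : ∀ (b : Bool) (i' : Fin n → Bool),
      (∑ l, if (Fin.cons b i' : Fin (n+1) → Bool) l then 1 else 0 : ℕ)
        = (if b then 1 else 0) + (∑ l, if i' l then 1 else 0 : ℕ) := by
    intro b i'
    rw [Fin.sum_univ_succ]
    simp
  simp only [hb, hs]
  rw [Fintype.sum_bool]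
  simp only [if_true, if_false, Bool.false_eq_true, pow_add, pow_zero, pow_one, one_mul, sub_zero]
  rw [sub_eq_add_neg, add_comm]
  congr 1
  calc ∑ x : Fin n → Bool, (-1 * (-1:ℝ) ^ (∑ l, if x l then 1 else 0 : ℕ)) *
        Y (Fin.cons (k - 1) fun l => j l - if x l then 1 else 0)
      = ∑ x : Fin n → Bool, -(((-1:ℝ) ^ (∑ l, if x l then 1 else 0 : ℕ)) *
        Y (Fin.cons (k - 1) fun l => j l - if x l then 1 else 0)) :=
        Finset.sum_congr rfl (fun x _ => by ring)
    _ = _ := Finset.sum_neg_distrib _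

lemma telescope : ∀ {N : ℕ} (Y : (Fin N → ℤ) → ℝ) (a t : Fin N → ℤ), (∀ l, a l ≤ t l) →
    ∑ j ∈ Finset.Icc a t, sqInc Y j
      = ∑ ε : Fin N → Bool, (-1:ℝ)^(∑ l, if ε l then 1 else 0 : ℕ)
          * Y (fun l => if ε l then a l - 1 else t l) := by
  intro N
  induction N with
  | zero =>
      intro Y a t h
      have ha : a = t := funext fun l => l.elim0
      subst ha
      rw [Finset.Icc_self, Finset.sum_singleton]
      rw [Fintype.sum_subsingleton _ (fun _ : Fin 0 => false)]
      simp only [Finset.univ_eq_empty, Finset.sum_empty, pow_zero, one_mul]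
      unfold sqInc
      rw [Fintype.sum_subsingleton _ (fun _ : Fin 0 => false)]
      simp only [Finset.univ_eq_empty, Finset.sum_empty, pow_zero, one_mul]
      exact congrArg Y (funext fun l => l.elim0)
  | succ n ih =>
      intro Y a t h
      have key : ∀ k : ℤ,
          ∑ j ∈ Fintype.piFinset (fun l : Fin n => Finset.Icc (a l.succ) (t l.succ)),
            sqInc (fun u => Y (Fin.cons k u)) j
          = ∑ ε' : Fin n → Bool, (-1:ℝ)^(∑ l, if ε' l then 1 else 0 : ℕ)
              * Y (Fin.cons k (fun l => if ε' l then a l.succ - 1 else t l.succ)) := by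
        intro k
        have := ih (fun u => Y (Fin.cons k u)) (fun l => a l.succ) (fun l => t l.succ)
          (fun l => h l.succ)
        rw [Pi.Icc_eq] at this
        exact this
      rw [Pi.Icc_eq, sum_piFinset_succ]
      have step1 : ∀ k ∈ Finset.Icc (a 0) (t 0),
          ∑ j ∈ Fintype.piFinset (fun l : Fin n => Finset.Icc (a l.succ) (t l.succ)),
            sqInc Y (Fin.cons k j)
          = (fun k : ℤ => ∑ ε' : Fin n → Bool, (-1:ℝ)^(∑ l, if ε' l then 1 else 0 : ℕ)
              * Y (Fin.cons k (fun l => if ε' l then a l.succ - 1 else t l.succ))) k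
            - (fun k : ℤ => ∑ ε' : Fin n → Bool, (-1:ℝ)^(∑ l, if ε' l then 1 else 0 : ℕ)
              * Y (Fin.cons k (fun l => if ε' l then a l.succ - 1 else t l.succ))) (k - 1) := by
        intro k _
        simp only
        rw [← key k, ← key (k-1), ← Finset.sum_sub_distrib]
        exact Finset.sum_congr rfl (fun j _ => sqInc_cons Y k j)
      rw [Finset.sum_congr rfl step1, sum_Icc_sub' _ _ _ (h 0)]
      rw [sum_bool_pi_succ (fun ε => (-1:ℝ)^(∑ l, if ε l then 1 else 0 : ℕ)
        * Y (fun l => if ε l then a l - 1 else t l))]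
      have hc : ∀ (b : Bool) (ε' : Fin n → Bool),
          (fun l => if (Fin.cons b ε' : Fin (n+1) → Bool) l then a l - 1 else t l)
            = Fin.cons (if b then a 0 - 1 else t 0)
                (fun l => if ε' l then a l.succ - 1 else t l.succ) := by
        intro b ε'
        ext l
        refine Fin.cases ?_ ?_ l <;> simp
      have hs : ∀ (b : Bool) (ε' : Fin n → Bool),
          (∑ l, if (Fin.cons b ε' : Fin (n+1) → Bool) l then 1 else 0 : ℕ)
            = (if b then 1 else 0) + (∑ l, if ε' l then 1 else 0 : ℕ) := by
        intro b ε'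
        rw [Fin.sum_univ_succ]; simp
      simp only [hc, hs]
      rw [Fintype.sum_bool]
      simp only [if_true, if_false, Bool.false_eq_true, pow_add, pow_zero, pow_one, one_mul]
      rw [sub_eq_add_neg, add_comm]
      congr 1
      symm
      calc ∑ ε' : Fin n → Bool, (-1 * (-1:ℝ) ^ (∑ l, if ε' l then 1 else 0 : ℕ)) *
            Y (Fin.cons (a 0 - 1) fun l => if ε' l then a l.succ - 1 else t l.succ)
          = ∑ ε' : Fin n → Bool, -(((-1:ℝ) ^ (∑ l, if ε' l then 1 else 0 : ℕ)) *
            Y (Fin.cons (a 0 - 1) fun l => if ε' l then a l.succ - 1 else t l.succ)) :=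
            Finset.sum_congr rfl (fun x _ => by ring)
        _ = _ := Finset.sum_neg_distrib _


def wsum {N : ℕ} (Θ : Fin N → ℝ) (u : Fin N → ℤ) : ℝ := ∑ l, (u l : ℝ) * Θ l

lemma wsum_sub {N : ℕ} (Θ : Fin N → ℝ) (p : Fin N → ℤ) (i : Fin N → Bool) :
    wsum Θ (fun l => p l - if i l then 1 else 0)
      = wsum Θ p - ∑ l, (if i l then (1:ℝ) else 0) * Θ l := by
  unfold wsum
  rw [← Finset.sum_sub_distrib]
  refine Finset.sum_congr rfl (fun l _ => ?_)
  by_cases h : i l <;> simp [h] <;> ring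

lemma sqInc_exp {N : ℕ} (Θ : Fin N → ℝ) (x : (Fin N → ℤ) → ℝ) (p : Fin N → ℤ) (c : ℝ) :
    sqInc (fun u => Real.exp (wsum Θ u - c) * x u) p
      = Real.exp (wsum Θ p - c) * (x p - prevInner Θ x p) := by
  unfold sqInc
  have hterm : ∀ i : Fin N → Bool,
      (-1:ℝ) ^ (∑ l, if i l then 1 else 0 : ℕ) *
        (Real.exp (wsum Θ (fun l => p l - if i l then 1 else 0) - c) *
          x (fun l => p l - if i l then 1 else 0))
      = Real.exp (wsum Θ p - c) *
        ((-1:ℝ) ^ (∑ l, if i l then 1 else 0 : ℕ) *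
          (Real.exp (-∑ l, (if i l then (1:ℝ) else 0) * Θ l) *
            x (fun l => p l - if i l then 1 else 0))) := by
    intro i
    rw [wsum_sub, show wsum Θ p - ∑ l, (if i l then (1:ℝ) else 0) * Θ l - c
        = (wsum Θ p - c) + (-∑ l, (if i l then (1:ℝ) else 0) * Θ l) by ring, Real.exp_add]
    ring
  rw [Finset.sum_congr rfl (fun i _ => hterm i), ← Finset.mul_sum]
  congr 1
  have hsplit := Finset.add_sum_erase Finset.univ
    (fun i : Fin N → Bool => (-1:ℝ) ^ (∑ l, if i l then 1 else 0 : ℕ) *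
      (Real.exp (-∑ l, (if i l then (1:ℝ) else 0) * Θ l) *
        x (fun l => p l - if i l then 1 else 0)))
    (Finset.mem_univ (fun _ : Fin N => false))
  rw [← hsplit]
  have h0 : (fun l => p l - if (fun _ : Fin N => false) l then 1 else 0) = p := by
    funext l; simp
  have hs0 : (∑ l : Fin N, if (fun _ : Fin N => false) l then 1 else 0 : ℕ) = 0 := by simp
  have he0 : (-∑ l : Fin N, (if (fun _ : Fin N => false) l then (1:ℝ) else 0) * Θ l) = 0 := by simp
  simp only [h0, hs0, he0]
  simp only [pow_zero, Real.exp_zero, one_mul]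
  congr 1
  unfold prevInner
  rw [Finset.filter_ne' Finset.univ (fun _ : Fin N => false)]
  rw [← Finset.sum_neg_distrib]
  refine Finset.sum_congr rfl (fun i _ => ?_)
  rw [pow_add, pow_one]
  ring

lemma repr_id {N : ℕ} (Θ : Fin N → ℝ) (x : (Fin N → ℤ) → ℝ) (p a : Fin N → ℤ)
    (h : ∀ l, a l ≤ p l) :
    ∑ u ∈ Finset.Icc a p, Real.exp (wsum Θ u - wsum Θ p) * (x u - prevInner Θ x u)
      = x p + ∑ ε ∈ Finset.univ.erase (fun _ : Fin N => false),
          (-1:ℝ)^(∑ l, if ε l then 1 else 0 : ℕ) *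
            (Real.exp (wsum Θ (fun l => if ε l then a l - 1 else p l) - wsum Θ p) *
              x (fun l => if ε l then a l - 1 else p l)) := by
  have hY : ∀ u, Real.exp (wsum Θ u - wsum Θ p) * (x u - prevInner Θ x u)
      = sqInc (fun v => Real.exp (wsum Θ v - wsum Θ p) * x v) u :=
    fun u => (sqInc_exp Θ x u (wsum Θ p)).symm
  rw [Finset.sum_congr rfl (fun u _ => hY u),
    telescope (fun v => Real.exp (wsum Θ v - wsum Θ p) * x v) a p h]
  rw [← Finset.add_sum_erase Finset.univ _ (Finset.mem_univ (fun _ : Fin N => false))]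
  congr 1
  have h0 : (fun l => if (fun _ : Fin N => false) l then a l - 1 else p l) = p := by
    funext l; simp
  have hs0 : (∑ l : Fin N, if (fun _ : Fin N => false) l then 1 else 0 : ℕ) = 0 := by simp
  simp only [h0, hs0]
  simp [Real.exp_zero]


variable {N : ℕ}

lemma wsum_add (Θ : Fin N → ℝ) (u v : Fin N → ℤ) : wsum Θ (u + v) = wsum Θ u + wsum Θ v := by
  unfold wsum
  rw [← Finset.sum_add_distrib]
  refine Finset.sum_congr rfl (fun l _ => ?_)
  simp only [Pi.add_apply]
  push_cast
  ring

lemma wsum_update (Θ : Fin N → ℝ) (w : Fin N → ℤ) (δ : Fin N) (z : ℤ) :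
    wsum Θ (Function.update w δ z)
      = (z : ℝ) * Θ δ + ∑ l ∈ Finset.univ.erase δ, (w l : ℝ) * Θ l := by
  unfold wsum
  rw [← Finset.add_sum_erase _ _ (Finset.mem_univ δ)]
  congr 1
  · rw [Function.update_self]
  · refine Finset.sum_congr rfl (fun l hl => ?_)
    rw [Function.update_of_ne (Finset.ne_of_mem_erase hl)]

lemma sum_Icc_shift (f : (Fin N → ℤ) → ℝ) (a b sh : Fin N → ℤ) :
    ∑ u ∈ Finset.Icc (a + sh) (b + sh), f u = ∑ u ∈ Finset.Icc a b, f (u + sh) := by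
  refine (Finset.sum_nbij' (fun u => u + sh) (fun u => u - sh) ?_ ?_ ?_ ?_ ?_).symm
  · intro u hu
    simp only [Finset.mem_Icc] at hu ⊢
    exact ⟨add_le_add_left hu.1 sh, add_le_add_left hu.2 sh⟩
  · intro u hu
    simp only [Finset.mem_Icc] at hu ⊢
    constructor
    · intro l; have := hu.1 l; simp only [Pi.add_apply, Pi.sub_apply] at *; omega
    · intro l; have := hu.2 l; simp only [Pi.add_apply, Pi.sub_apply] at *; omega
  · intro u _; simp
  · intro u _; simp
  · intro u _; rfl

/-- The corner point of the box. -/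
def dcorner (aa p : Fin N → ℤ) (ε : Fin N → Bool) : Fin N → ℤ :=
  fun l => if ε l then aa l - 1 else p l

/-- A single boundary term. -/
noncomputable def dterm (Θ : Fin N → ℝ) (x : (Fin N → ℤ) → ℝ) (p aa : Fin N → ℤ)
    (ε : Fin N → Bool) : ℝ :=
  (-1:ℝ)^(∑ l, if ε l then 1 else 0 : ℕ) *
    (Real.exp (wsum Θ (dcorner aa p ε) - wsum Θ p) * x (dcorner aa p ε))

/-- Boundary index sets. -/
def Ebd (N j : ℕ) : Finset (Fin N → Bool) :=
  (Finset.univ.erase (fun _ => false)).filter (fun ε => ∀ l : Fin N, ε l = true → (l:ℕ) < j)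

/-- Partial compensated field. -/
noncomputable def dA (Θ : Fin N → ℝ) (x : (Fin N → ℤ) → ℝ) (p aa : Fin N → ℤ) (j : ℕ) : ℝ :=
  x p + ∑ ε ∈ Ebd N j, dterm Θ x p aa ε

lemma Ebd_zero : Ebd N 0 = ∅ := by
  refine Finset.eq_empty_iff_forall_notMem.2 (fun ε hε => ?_)
  rw [Ebd, Finset.mem_filter, Finset.mem_erase] at hε
  obtain ⟨⟨hne, -⟩, hcond⟩ := hε
  have : ∃ l, ε l = true := by
    by_contra hno
    push_neg at hno
    exact hne (funext fun l => by simpa using hno l)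
  obtain ⟨l, hl⟩ := this
  exact Nat.not_lt_zero _ (hcond l hl)

lemma Ebd_mono {j : ℕ} : Ebd N j ⊆ Ebd N (j+1) := by
  intro ε hε
  rw [Ebd, Finset.mem_filter] at hε ⊢
  exact ⟨hε.1, fun l hl => Nat.lt_succ_of_lt (hε.2 l hl)⟩

lemma Ebd_top (hε : ε ∈ Finset.univ.erase (fun _ : Fin N => false)) : ε ∈ Ebd N N := by
  rw [Ebd, Finset.mem_filter]
  exact ⟨hε, fun l _ => l.isLt⟩

lemma Ebd_eq_top : Ebd N N = Finset.univ.erase (fun _ : Fin N => false) := by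
  refine Finset.Subset.antisymm ?_ (fun ε hε => Ebd_top hε)
  intro ε hε
  rw [Ebd, Finset.mem_filter] at hε
  exact hε.1

lemma Ebd_mem_lt {j : ℕ} {ε : Fin N → Bool} (hε : ε ∈ Ebd N j) :
    ∀ l : Fin N, ε l = true → (l:ℕ) < j := (Finset.mem_filter.1 hε).2

lemma Ebd_sdiff_delta {j : ℕ} (hj : j < N) {ε : Fin N → Bool}
    (hε : ε ∈ Ebd N (j+1) \ Ebd N j) : ε ⟨j, hj⟩ = true := by
  rw [Finset.mem_sdiff] at hε
  obtain ⟨h1, h2⟩ := hε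
  rw [Ebd, Finset.mem_filter] at h1 h2
  by_contra hno
  refine h2 ⟨h1.1, fun l hl => ?_⟩
  have hlt := h1.2 l hl
  rcases Nat.lt_succ_iff_lt_or_eq.1 hlt with h | h
  · exact h
  · exfalso
    apply hno
    have : l = ⟨j, hj⟩ := Fin.ext h
    rwa [this] at hl

lemma dterm_indep (Θ : Fin N → ℝ) (x : (Fin N → ℤ) → ℝ) (p aa : Fin N → ℤ)
    {ε : Fin N → Bool} {δ : Fin N} (hεδ : ε δ = false) (z : ℤ) :
    dterm Θ x p (Function.update aa δ z) ε = dterm Θ x p aa ε := by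
  have hc : dcorner (Function.update aa δ z) p ε = dcorner aa p ε := by
    funext l
    by_cases hl : l = δ
    · subst hl; simp [dcorner, hεδ]
    · simp [dcorner, Function.update_of_ne hl]
  rw [dterm, dterm, hc]

lemma dA_succ (Θ : Fin N → ℝ) (x : (Fin N → ℤ) → ℝ) (p aa : Fin N → ℤ) (j : ℕ) :
    dA Θ x p aa (j+1) = dA Θ x p aa j + ∑ ε ∈ Ebd N (j+1) \ Ebd N j, dterm Θ x p aa ε := by
  rw [dA, dA, ← Finset.sum_sdiff (Ebd_mono (j := j))]
  ring

lemma dA_top (Θ : Fin N → ℝ) (x : (Fin N → ℤ) → ℝ) (p a : Fin N → ℤ) (h : ∀ l, a l ≤ p l) :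
    dA Θ x p a N
      = ∑ u ∈ Finset.Icc a p, Real.exp (wsum Θ u - wsum Θ p) * (x u - prevInner Θ x u) := by
  rw [repr_id Θ x p a h, dA, Ebd_eq_top]
  rfl

lemma tim_add_base {Ω : Type*} [MeasurableSpace Ω] {μ : Measure Ω} {ι : Type*} {l : Filter ι}
    {f : ι → Ω → ℝ} {b : Ω → ℝ} (hf : TendstoInMeasure μ f l (fun _ => 0)) :
    TendstoInMeasure μ (fun i ω => b ω + f i ω) l b := by
  rw [tendstoInMeasure_iff_dist] at hf ⊢
  intro ε hε
  refine (hf ε hε).congr (fun i => ?_)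
  congr 1
  ext x
  simp [Real.dist_eq]

lemma dterm_tendsto {Ω : Type*} [MeasurableSpace Ω] (μ : Measure Ω)
    (Θ : Fin N → ℝ) (X : (Fin N → ℤ) → Ω → ℝ)
    (hlim : ∀ (j : Fin N) (t : Fin N → ℤ),
      TendstoInMeasure μ
        (fun m : ℤ => fun ω => Real.exp ((m : ℝ) * Θ j) * X (Function.update t j m) ω)
        atBot (fun _ => 0))
    (p a₀ : Fin N → ℤ) (δ : Fin N) (ε : Fin N → Bool) (hεδ : ε δ = true)
    (v : ℕ → ℤ) (hv : Tendsto v atTop atBot) :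
    TendstoInMeasure μ (fun m ω => dterm Θ (fun u => X u ω) p (Function.update a₀ δ (v m)) ε)
      atTop (fun _ => 0) := by
  set w := dcorner a₀ p ε with hw_def
  have hw : ∀ z : ℤ, dcorner (Function.update a₀ δ z) p ε = Function.update w δ (z - 1) := by
    intro z
    funext l
    by_cases hl : l = δ
    · subst hl
      simp [dcorner, hεδ, Function.update_self]
    · simp [dcorner, Function.update_of_ne hl, hw_def]
  set c₀ : ℝ := ∑ l ∈ Finset.univ.erase δ, (w l : ℝ) * Θ l with hc₀
  set C : ℝ := (-1:ℝ)^(∑ l, if ε l then 1 else 0 : ℕ) * Real.exp (c₀ - wsum Θ p) with hC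
  have hterm : ∀ (m : ℕ) (ω : Ω),
      dterm Θ (fun u => X u ω) p (Function.update a₀ δ (v m)) ε
        = C * (Real.exp (((v m - 1 : ℤ) : ℝ) * Θ δ) * X (Function.update w δ (v m - 1)) ω) := by
    intro m ω
    rw [dterm, hw]
    rw [wsum_update Θ w δ (v m - 1)]
    rw [hC]
    rw [show ((v m - 1 : ℤ) : ℝ) * Θ δ + c₀ - wsum Θ p
        = (((v m - 1 : ℤ) : ℝ) * Θ δ) + (c₀ - wsum Θ p) by ring, Real.exp_add]
    ring
  have hcomp : Tendsto (fun m : ℕ => v m - 1) atTop atBot :=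
    tendsto_atBot_add_const_right _ (-1) hv
  have h0 := tim_comp (hlim δ w) hcomp
  have h1 := tim_const_mul C h0
  refine h1.congr (fun m => ?_) (by rfl)
  filter_upwards with ω
  exact (hterm m ω).symm


end StatAux

set_option maxHeartbeats 1000000 in
/-- Theorem gchar1: if `X` satisfies
`X_t = ⟨Θ̂, X̂⁻_t⟩ + Δ_t G` for some `G ∈ 𝒢_Θ` and
`e^{m θ_j} X_{t₁,…,m,…,t_N} → 0` in probability as `m → −∞` in each coordinate
direction, then `X` is stationary. -/
theorem stationary_of_representation {Ω : Type*} [MeasurableSpace Ω]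
    (μ : Measure Ω) [IsProbabilityMeasure μ] {N : ℕ} (hN : 1 ≤ N)
    (Θ : Fin N → ℝ) (hΘ : ∀ l, 0 < Θ l)
    (X : (Fin N → ℤ) → Ω → ℝ) (hmeas : ∀ t, Measurable (X t))
    (G : (Fin N → ℤ) → Ω → ℝ) (hG : MemClassG μ Θ G)
    (hrep : ∀ t ω, X t ω = prevInner Θ (fun u => X u ω) t + sqInc (fun u => G u ω) t)
    (hlim : ∀ (j : Fin N) (t : Fin N → ℤ),
      TendstoInMeasure μ
        (fun m : ℤ => fun ω => Real.exp ((m : ℝ) * Θ j) * X (Function.update t j m) ω)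
        atBot (fun _ => 0)) :
    IsStationaryRF μ X := by
  classical
  intro s n t
  -- rearranged representation: the increments of `G` are an explicit function of `X`
  have hWf : ∀ (u : Fin N → ℤ) (ω : Ω),
      X u ω - prevInner Θ (fun v => X v ω) u = sqInc (fun v => G v ω) u := by
    intro u ω
    have := hrep u ω
    linarith
  have hWmeas : ∀ u : Fin N → ℤ,
      Measurable (fun ω => X u ω - prevInner Θ (fun v => X v ω) u) := by
    intro u
    refine (hmeas u).sub ?_
    unfold prevInner
    refine Finset.measurable_sum _ (fun i _ => ?_)
    exact ((hmeas _).const_mul _).const_mul _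
  -- a uniform bound on the (finitely many) time points
  obtain ⟨B, hB⟩ : ∃ B : ℕ, ∀ (i : Fin n) (l : Fin N), -(B:ℤ) ≤ t i l := by
    refine ⟨∑ i, ∑ l, (t i l).natAbs, fun i l => ?_⟩
    have h1 : (t i l).natAbs ≤ ∑ l, (t i l).natAbs :=
      Finset.single_le_sum (f := fun l => (t i l).natAbs) (fun _ _ => Nat.zero_le _)
        (Finset.mem_univ l)
    have h2 : (∑ l, (t i l).natAbs) ≤ ∑ i, ∑ l, (t i l).natAbs :=
      Finset.single_le_sum (f := fun i => ∑ l, (t i l).natAbs) (fun _ _ => Nat.zero_le _)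
        (Finset.mem_univ i)
    omega
  -- the partially compensated vector-valued fields
  set AA : (Fin N → ℤ) → ℕ → (Fin N → ℕ) → Ω → (Fin n → ℝ) :=
    fun sh j M ω i => dA Θ (fun v => X v ω) (t i + sh) ((fun l => -(M l : ℤ)) + sh) j with hAA
  have hAAmeas : ∀ sh j M, Measurable (AA sh j M) := by
    intro sh j M
    refine measurable_pi_lambda _ (fun i => ?_)
    simp only [hAA]
    unfold dA dterm
    refine (hmeas _).add ?_
    refine Finset.measurable_sum _ (fun ε _ => ?_)
    exact ((hmeas _).const_mul _).const_mul _
  -- top level: `AA sh N M` is the compensated box sum of shifted increments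
  have hbase : ∀ (sh : Fin N → ℤ) M, (∀ l, B ≤ M l) →
      ∀ ω, AA sh N M ω = (fun i => ∑ u ∈ Finset.Icc (fun l => -(M l:ℤ)) (t i),
        Real.exp (wsum Θ u - wsum Θ (t i)) *
          (X (u + sh) ω - prevInner Θ (fun v => X v ω) (u + sh))) := by
    intro sh M hM ω
    funext i
    simp only [hAA]
    rw [dA_top Θ (fun v => X v ω) (t i + sh) ((fun l => -(M l:ℤ)) + sh)
      (fun l => by
        simp only [Pi.add_apply]
        have h1 := hB i l
        have h2 := hM l
        omega)]
    rw [sum_Icc_shift (fun u => Real.exp (wsum Θ u - wsum Θ (t i + sh)) *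
      ((fun v => X v ω) u - prevInner Θ (fun v => X v ω) u)) (fun l => -(M l:ℤ)) (t i) sh]
    refine Finset.sum_congr rfl (fun u hu => ?_)
    simp only
    rw [wsum_add, wsum_add]
    congr 2
    ring
  -- stationarity of the increment field, expressed through `X`
  have hstatinc : ∀ (m' : ℕ) (e : Fin m' → Fin N → ℤ),
      μ.map (fun ω k => X (e k + s) ω - prevInner Θ (fun v => X v ω) (e k + s))
        = μ.map (fun ω k => X (e k) ω - prevInner Θ (fun v => X v ω) (e k)) := by
    intro m' e
    have h := hG.1 s m' e
    have e1 : (fun ω (k : Fin m') => X (e k + s) ω - prevInner Θ (fun v => X v ω) (e k + s))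
        = (fun ω k => sqInc (fun u => G u ω) (e k + s)) := by
      funext ω k; exact hWf _ ω
    have e2 : (fun ω (k : Fin m') => X (e k) ω - prevInner Θ (fun v => X v ω) (e k))
        = (fun ω k => sqInc (fun u => G u ω) (e k)) := by
      funext ω k; exact hWf _ ω
    rw [e1, e2]
    exact h
  -- distributional equality at the top level
  have hbase2 : ∀ M, (∀ l, B ≤ M l) → μ.map (AA s N M) = μ.map (AA 0 N M) := by
    intro M hM
    set U : Finset (Fin N → ℤ) :=
      Finset.univ.biUnion (fun i : Fin n => Finset.Icc (fun l => -(M l:ℤ)) (t i)) with hU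
    have hUsub : ∀ i : Fin n, Finset.Icc (fun l => -(M l:ℤ)) (t i) ⊆ U := by
      intro i
      rw [hU]
      exact Finset.subset_biUnion_of_mem
        (fun i : Fin n => Finset.Icc (fun l => -(M l:ℤ)) (t i)) (Finset.mem_univ i)
    set e : Fin U.card → Fin N → ℤ := fun k => (U.equivFin.symm k : { x // x ∈ U }).1 with he
    set Ψ : (Fin U.card → ℝ) → Fin n → ℝ := fun v i =>
      ∑ u ∈ (Finset.Icc (fun l => -(M l:ℤ)) (t i)).attach,
        Real.exp (wsum Θ u.1 - wsum Θ (t i)) * v (U.equivFin ⟨u.1, hUsub i u.2⟩) with hΨ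
    have hΨmeas : Measurable Ψ := by
      refine measurable_pi_lambda _ (fun i => ?_)
      refine Finset.measurable_sum _ (fun u _ => ?_)
      exact (measurable_pi_apply _).const_mul _
    have hcomp : ∀ sh, (∀ l, B ≤ M l) → ∀ ω : Ω, AA sh N M ω
        = Ψ (fun k => X (e k + sh) ω - prevInner Θ (fun v => X v ω) (e k + sh)) := by
      intro sh hM' ω
      rw [hbase sh M hM' ω]
      funext i
      simp only [hΨ]
      rw [← Finset.sum_attach (Finset.Icc (fun l => -(M l:ℤ)) (t i))
        (fun u => Real.exp (wsum Θ u - wsum Θ (t i)) *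
          (X (u + sh) ω - prevInner Θ (fun v => X v ω) (u + sh)))]
      refine Finset.sum_congr rfl (fun u _ => ?_)
      have heq : e (U.equivFin ⟨u.1, hUsub i u.2⟩) = u.1 := by
        simp only [he]
        rw [Equiv.symm_apply_apply]
      rw [heq]
    have hinner : ∀ sh : Fin N → ℤ,
        Measurable (fun ω (k : Fin U.card) =>
          X (e k + sh) ω - prevInner Θ (fun v => X v ω) (e k + sh)) :=
      fun sh => measurable_pi_lambda _ (fun k => hWmeas _)
    have hmapsh : ∀ sh, μ.map (AA sh N M)
        = (μ.map (fun ω k => X (e k + sh) ω - prevInner Θ (fun v => X v ω) (e k + sh))).map Ψ := by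
      intro sh
      have hfe : AA sh N M
          = fun ω => Ψ (fun k => X (e k + sh) ω - prevInner Θ (fun v => X v ω) (e k + sh)) :=
        funext (hcomp sh hM)
      rw [hfe, Measure.map_map hΨmeas (hinner sh)]
      rfl
    rw [hmapsh s, hmapsh 0, hstatinc U.card e]
    congr 1
    congr 1
    funext ω k
    rw [add_zero]
  -- the inductive step: peel off one coordinate using limits in measure
  have hstep : ∀ j, j < N →
      (∀ M, (∀ l, B ≤ M l) → μ.map (AA s (j+1) M) = μ.map (AA 0 (j+1) M)) →
      ∀ M, (∀ l, B ≤ M l) → μ.map (AA s j M) = μ.map (AA 0 j M) := by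
    intro j hj IH M hM
    set δ : Fin N := ⟨j, hj⟩ with hδ
    have hconv : ∀ sh : Fin N → ℤ,
        TendstoInMeasure μ (fun m => AA sh (j+1) (Function.update M δ m)) atTop (AA sh j M) := by
      intro sh
      refine tim_pi (fun i => ?_)
      have haa : ∀ m : ℕ, ((fun l => -((Function.update M δ m) l : ℤ)) + sh)
          = Function.update ((fun l => -(M l:ℤ)) + sh) δ (-(m:ℤ) + sh δ) := by
        intro m
        funext l
        by_cases hl : l = δ
        · subst hl; simp [Function.update_self]
        · simp [Function.update_of_ne hl]
      have hformula : ∀ (m : ℕ) (ω : Ω), AA sh (j+1) (Function.update M δ m) ω i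
          = AA sh j M ω i + ∑ ε ∈ Ebd N (j+1) \ Ebd N j,
              dterm Θ (fun v => X v ω) (t i + sh)
                (Function.update ((fun l => -(M l:ℤ)) + sh) δ (-(m:ℤ) + sh δ)) ε := by
        intro m ω
        simp only [hAA]
        rw [haa m, dA_succ]
        congr 1
        rw [dA, dA]
        congr 1
        refine Finset.sum_congr rfl (fun ε hε => ?_)
        refine dterm_indep Θ _ _ _ ?_ _
        cases hb : ε δ
        · rfl
        · exfalso
          have := Ebd_mem_lt hε δ hb
          simp only [hδ] at this
          omega
      have hterm : ∀ ε ∈ Ebd N (j+1) \ Ebd N j, TendstoInMeasure μ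
          (fun (m : ℕ) ω => dterm Θ (fun v => X v ω) (t i + sh)
            (Function.update ((fun l => -(M l:ℤ)) + sh) δ (-(m:ℤ) + sh δ)) ε)
          atTop (fun _ => 0) := by
        intro ε hε
        have hεδ := Ebd_sdiff_delta hj hε
        have hv : Tendsto (fun m : ℕ => -(m:ℤ) + sh δ) atTop atBot :=
          tendsto_atBot_add_const_right _ (sh δ)
            (tendsto_neg_atBot_iff.2 tendsto_natCast_atTop_atTop)
        exact dterm_tendsto μ Θ X hlim (t i + sh) _ δ ε hεδ _ hv
      have hsum := tim_sum_zero (Ebd N (j+1) \ Ebd N j) hterm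
      have hbase' := tim_add_base (b := fun ω => AA sh j M ω i) hsum
      exact TendstoInMeasure.congr (fun m => ae_of_all μ fun ω => (hformula m ω).symm)
        (ae_of_all μ fun ω => rfl) hbase'
    have heqv : ∀ᶠ m in atTop,
        μ.map (AA s (j+1) (Function.update M δ m)) = μ.map (AA 0 (j+1) (Function.update M δ m)) := by
      filter_upwards [Filter.eventually_ge_atTop B] with m hm
      refine IH _ (fun l => ?_)
      by_cases hl : l = δ
      · subst hl; simpa [Function.update_self] using hm
      · simpa [Function.update_of_ne hl] using hM l
    exact map_eq_of_tim (fun m => hAAmeas _ _ _) (fun m => hAAmeas _ _ _)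
      (hAAmeas _ _ _) (hAAmeas _ _ _) heqv (hconv s) (hconv 0)
  -- downward induction from level N to level 0
  have main : ∀ k, k ≤ N → ∀ M, (∀ l, B ≤ M l) →
      μ.map (AA s (N - k) M) = μ.map (AA 0 (N - k) M) := by
    intro k
    induction k with
    | zero =>
        intro _ M hM
        simpa using hbase2 M hM
    | succ k ih =>
        intro hk M hM
        have hjlt : N - (k+1) < N := by omega
        have hsucc : N - (k+1) + 1 = N - k := by omega
        refine hstep (N - (k+1)) hjlt (fun M' hM' => ?_) M hM
        rw [hsucc]
        exact ih (by omega) M' hM'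
  have h0 := main N le_rfl (fun _ => B) (fun _ => le_rfl)
  rw [Nat.sub_self] at h0
  have hA0 : ∀ (sh : Fin N → ℤ) M, AA sh 0 M = fun ω i => X (t i + sh) ω := by
    intro sh M
    funext ω i
    simp only [hAA]
    rw [dA, Ebd_zero, Finset.sum_empty, add_zero]
  rw [hA0 s _, hA0 0 _] at h0
  have hz : (fun ω (i : Fin n) => X (t i + 0) ω) = (fun ω i => X (t i) ω) := by
    funext ω i
    rw [add_zero]
  rw [hz] at h0
  exact h0
end
end
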